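/- Let g = (h, n) ∈ ℤ ≀ (ℤ/Iℤ) = (⊕_{ℤ/Iℤ} ℤ) ⋊ ℤ/Iℤ. The centralizer Z(g) is generated by the set P_n = {a_i a_{i+n} a_{i+2n} ⋯ a_{i-n} : i ∈ ℤ/Iℤ} together with a single element g' = (h', n') where n' divides n in ℤ/Iℤ (i.e., i·n' = n for some i ∈ ℤ) and (g')^i g⁻¹ ∈ ⟨P_{n'}⟩. -/

import Mathlib

/-- The base group `⊕_{ℤ/Iℤ} ℤ` of `ℤ ≀ (ℤ/Iℤ)`, written multiplicatively. -/
abbrev Base (I : ℕ) := Multiplicative (ZMod I →₀ ℤ)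

/-- The shift automorphism of the base group. -/
def shiftEquiv (I : ℕ) (k : ZMod I) : (ZMod I →₀ ℤ) ≃+ (ZMod I →₀ ℤ) :=
  Finsupp.domCongr (Equiv.addRight k)

/-- The shift action of `ℤ/Iℤ` on the base group. -/
noncomputable def shiftHom (I : ℕ) : Multiplicative (ZMod I) →* MulAut (Base I) :=
  MonoidHom.mk' (fun k => AddEquiv.toMultiplicative (shiftEquiv I k.toAdd)) (by
    intro x y
    apply MulEquiv.ext
    intro fm
    apply Multiplicative.toAdd.injective
    ext b
    simp [shiftEquiv, Finsupp.domCongr_apply, Finsupp.equivMapDomain_apply,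
      Equiv.Perm.mul_def, sub_sub]
    ring_nf)

/-- The wreath product `ℤ ≀ (ℤ/Iℤ) = (⊕_{ℤ/Iℤ} ℤ) ⋊ ℤ/Iℤ`. -/
abbrev W (I : ℕ) := SemidirectProduct (Base I) (Multiplicative (ZMod I)) (shiftHom I)

/-- The base element `a i * a (i+n) * a (i+2n) * ⋯ * a (i-n)`: the indicator (in
`⊕_{ℤ/Iℤ} ℤ`) of the coset `i + ⟨n⟩`. -/
noncomputable def pElt (I : ℕ) [NeZero I] (i n : ZMod I) : ZMod I →₀ ℤ := by
  classical
  exact ∑ j ∈ Finset.univ.filter (fun j => j ∈ AddSubgroup.zmultiples n),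
    Finsupp.single (i + j) 1

/-- The set `P n` of products of base generators along the cosets of `⟨n⟩`. -/
noncomputable def PGenSet (I : ℕ) [NeZero I] (n : ZMod I) : Set (W I) :=
  Set.range fun i : ZMod I => SemidirectProduct.inl (Multiplicative.ofAdd (pElt I i n))


lemma shift_apply (I : ℕ) (k : ZMod I) (f : ZMod I →₀ ℤ) (b : ZMod I) :
    shiftEquiv I k f b = f (b - k) := by
  simp [shiftEquiv, Finsupp.domCongr_apply, Finsupp.equivMapDomain_apply, sub_eq_add_neg]

lemma shift_shift (I : ℕ) (k l : ZMod I) (f : ZMod I →₀ ℤ) :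
    shiftEquiv I k (shiftEquiv I l f) = shiftEquiv I (k + l) f := by
  ext b
  simp only [shift_apply, sub_sub]

lemma shift_zero' (I : ℕ) (f : ZMod I →₀ ℤ) : shiftEquiv I 0 f = f := by
  ext b; simp [shift_apply]

lemma pElt_apply (I : ℕ) [NeZero I] (i n b : ZMod I) :
    pElt I i n b = if b - i ∈ AddSubgroup.zmultiples n then 1 else 0 := by
  classical
  rw [pElt, Finsupp.finset_sum_apply]
  have h1 : ∀ j : ZMod I, (Finsupp.single (i + j) (1:ℤ)) b = if j = b - i then 1 else 0 := by
    intro j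
    rw [Finsupp.single_apply]
    congr 1
    apply propext
    constructor
    · intro H; rw [← H]; exact (add_sub_cancel_left i j).symm
    · intro H; rw [H]; exact add_sub_cancel i b
  rw [Finset.sum_congr rfl fun j _ => h1 j, Finset.sum_ite_eq']
  simp

lemma shift_pElt (I : ℕ) [NeZero I] (i n : ZMod I) :
    shiftEquiv I n (pElt I i n) = pElt I i n := by
  ext b
  rw [shift_apply, pElt_apply, pElt_apply]
  congr 1
  apply propext
  constructor
  · intro H
    have e : b - i = (b - n - i) + n := by ring
    rw [e]; exact AddSubgroup.add_mem _ H (AddSubgroup.mem_zmultiples n)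
  · intro H
    have e : b - n - i = (b - i) - n := by ring
    rw [e]; exact AddSubgroup.sub_mem _ H (AddSubgroup.mem_zmultiples n)

lemma periodic_const (I : ℕ) {n : ZMod I} {f : ZMod I →₀ ℤ}
    (hf : shiftEquiv I n f = f) (b : ZMod I) {c : ZMod I}
    (hc : c ∈ AddSubgroup.zmultiples n) : f (b + c) = f b := by
  have key : ∀ x : ZMod I, f (x - n) = f x := by
    intro x
    conv_rhs => rw [← hf]
    rw [shift_apply]
  obtain ⟨k, rfl⟩ := AddSubgroup.mem_zmultiples_iff.mp hc
  clear hc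
  induction k using Int.induction_on with
  | zero => simp
  | succ k ih =>
      have e : b + ((k : ℤ) + 1) • n = (b + (k : ℤ) • n + n) := by
        rw [add_smul, one_smul]; ring
      rw [e, ← key (b + (k : ℤ) • n + n)]
      simpa using ih
  | pred k ih =>
      have e : b + (-(k : ℤ) - 1) • n = (b + (-(k : ℤ)) • n) - n := by
        rw [sub_smul, one_smul]; ring
      rw [e, key (b + (-(k : ℤ)) • n)]
      exact ih

lemma periodic_mem_closure (I : ℕ) [NeZero I] {n : ZMod I} {f : ZMod I →₀ ℤ}
    (hf : shiftEquiv I n f = f) :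
    f ∈ AddSubgroup.closure (Set.range fun i => pElt I i n) := by
  classical
  suffices H : ∀ (N : ℕ) (f : ZMod I →₀ ℤ), f.support.card ≤ N → shiftEquiv I n f = f →
      f ∈ AddSubgroup.closure (Set.range fun i => pElt I i n) from
    H f.support.card f le_rfl hf
  intro N
  induction N with
  | zero =>
      intro f hcard _
      have : f = 0 := by
        ext b
        by_contra hb
        have : b ∈ f.support := Finsupp.mem_support_iff.mpr hb
        have := Finset.card_pos.mpr ⟨b, this⟩
        omega
      rw [this]; exact zero_mem _
  | succ N ih =>
      intro f hcard hf
      by_cases h0 : f = 0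
      · rw [h0]; exact zero_mem _
      obtain ⟨b, hb⟩ := Finsupp.support_nonempty_iff.mpr h0
      set c : ℤ := f b with hc
      set f' : ZMod I →₀ ℤ := f - c • pElt I b n with hf'def
      have hshift : shiftEquiv I n f' = f' := by
        rw [hf'def, map_sub, map_zsmul, hf, shift_pElt]
      have hsupp : f'.support ⊆ f.support.erase b := by
        intro x hx
        have hx0 : f' x ≠ 0 := Finsupp.mem_support_iff.mp hx
        have hfx : f' x = f x - c * (if x - b ∈ AddSubgroup.zmultiples n then 1 else 0) := by
          rw [hf'def]
          simp [pElt_apply, mul_comm]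
        by_cases hmem : x - b ∈ AddSubgroup.zmultiples n
        · exfalso
          have : f x = c := by
            have := periodic_const I hf b hmem
            rw [add_sub_cancel] at this
            rw [this, hc]
          rw [hfx, if_pos hmem, this] at hx0
          simp at hx0
        · rw [hfx, if_neg hmem] at hx0
          simp only [mul_zero, sub_zero] at hx0
          refine Finset.mem_erase.mpr ⟨?_, Finsupp.mem_support_iff.mpr hx0⟩
          rintro rfl
          exact hmem (by simpa using zero_mem (AddSubgroup.zmultiples n))
      have hcard' : f'.support.card ≤ N := by
        have := Finset.card_le_card hsupp
        have := Finset.card_erase_of_mem hb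
        omega
      have hmem' : f' ∈ AddSubgroup.closure (Set.range fun i => pElt I i n) :=
        ih f' hcard' hshift
      have : f = f' + c • pElt I b n := by rw [hf'def]; abel
      rw [this]
      exact add_mem hmem' (zsmul_mem (AddSubgroup.subset_closure (Set.mem_range.mpr ⟨b, rfl⟩)) c)

lemma shiftHom_apply (I : ℕ) (k : Multiplicative (ZMod I)) (a : Base I) :
    (shiftHom I k) a = Multiplicative.ofAdd (shiftEquiv I k.toAdd a.toAdd) := rfl

lemma mem_centralizer_iff' (I : ℕ) (g x : W I) :
    x ∈ Subgroup.centralizer {g} ↔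
      shiftEquiv I g.right.toAdd x.left.toAdd - x.left.toAdd =
      shiftEquiv I x.right.toAdd g.left.toAdd - g.left.toAdd := by
  rw [Subgroup.mem_centralizer_iff]
  simp only [Set.mem_singleton_iff, forall_eq]
  rw [SemidirectProduct.ext_iff]
  simp only [SemidirectProduct.mul_left, SemidirectProduct.mul_right]
  rw [mul_comm x.right g.right]
  simp only [and_true, eq_self_iff_true]
  rw [shiftHom_apply, shiftHom_apply, ← Multiplicative.toAdd.injective.eq_iff]
  simp only [toAdd_mul, toAdd_ofAdd]
  rw [sub_eq_sub_iff_add_eq_add]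
  constructor <;> intro H <;> abel_nf at H ⊢ <;> exact H

/-- The set of shifts `m` for which the centralizer equation is solvable. -/
def TSub (I : ℕ) (n : ZMod I) (h : ZMod I →₀ ℤ) : AddSubgroup (ZMod I) where
  carrier := {m | ∃ f : ZMod I →₀ ℤ, shiftEquiv I n f - f = shiftEquiv I m h - h}
  zero_mem' := ⟨0, by rw [map_zero, shift_zero']; simp⟩
  add_mem' := by
    rintro m₁ m₂ ⟨f₁, h₁⟩ ⟨f₂, h₂⟩
    refine ⟨f₁ + shiftEquiv I m₁ f₂, ?_⟩
    have e1 : shiftEquiv I n (shiftEquiv I m₁ f₂) = shiftEquiv I m₁ (shiftEquiv I n f₂) := by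
      rw [shift_shift, shift_shift, add_comm]
    calc shiftEquiv I n (f₁ + shiftEquiv I m₁ f₂) - (f₁ + shiftEquiv I m₁ f₂)
        = (shiftEquiv I n f₁ - f₁) + shiftEquiv I m₁ (shiftEquiv I n f₂ - f₂) := by
          rw [map_add, e1, map_sub]; abel
      _ = (shiftEquiv I m₁ h - h) + shiftEquiv I m₁ (shiftEquiv I m₂ h - h) := by
          rw [h₁, h₂]
      _ = shiftEquiv I (m₁ + m₂) h - h := by
          rw [map_sub, shift_shift]; abel
  neg_mem' := by
    rintro m ⟨f, hf⟩
    refine ⟨-(shiftEquiv I (-m) f), ?_⟩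
    have e1 : shiftEquiv I n (shiftEquiv I (-m) f) = shiftEquiv I (-m) (shiftEquiv I n f) := by
      rw [shift_shift, shift_shift, add_comm]
    calc shiftEquiv I n (-(shiftEquiv I (-m) f)) - (-(shiftEquiv I (-m) f))
        = -(shiftEquiv I (-m) (shiftEquiv I n f - f)) := by
          rw [map_sub, map_neg, e1]; abel
      _ = -(shiftEquiv I (-m) (shiftEquiv I m h - h)) := by rw [hf]
      _ = shiftEquiv I (-m) h - h := by
          rw [map_sub, shift_shift, neg_add_cancel, shift_zero']; abel

lemma inl_mem_closure (I : ℕ) [NeZero I] {S : Set (ZMod I →₀ ℤ)} {f : ZMod I →₀ ℤ}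
    (hf : f ∈ AddSubgroup.closure S) :
    (SemidirectProduct.inl (φ := shiftHom I) (Multiplicative.ofAdd f)) ∈
      Subgroup.closure ((fun x => SemidirectProduct.inl (φ := shiftHom I)
        (Multiplicative.ofAdd x)) '' S) := by
  induction hf using AddSubgroup.closure_induction with
  | mem x hx => exact Subgroup.subset_closure (Set.mem_image_of_mem _ hx)
  | zero => simpa using one_mem _
  | add x y _ _ hx hy =>
      have : (Multiplicative.ofAdd (x + y)) =
          Multiplicative.ofAdd x * Multiplicative.ofAdd y := rfl
      rw [this, map_mul]
      exact mul_mem hx hy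
  | neg x _ hx =>
      have : (Multiplicative.ofAdd (-x)) = (Multiplicative.ofAdd x)⁻¹ := rfl
      rw [this, map_inv]
      exact inv_mem hx

lemma PGenSet_eq (I : ℕ) [NeZero I] (n : ZMod I) :
    PGenSet I n = (fun x => SemidirectProduct.inl (φ := shiftHom I)
      (Multiplicative.ofAdd x)) '' Set.range (fun i => pElt I i n) := by
  rw [PGenSet, ← Set.range_comp]
  rfl

set_option maxHeartbeats 1000000 in
/-- For `g = (h, n) ∈ ℤ ≀ (ℤ/Iℤ)`, the centralizer of `g` is generated
by `P n` together with one element `g' = (h', n')`, where `i·n' = n` for some `i : ℤ` and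
`(g')^i * g⁻¹ ∈ ⟨P n'⟩`. -/
theorem stmt_4 (I : ℕ) [NeZero I] (g : W I) :
    ∃ g' : W I, ∃ i : ℤ,
      (i : ZMod I) * (Multiplicative.toAdd g'.right) = Multiplicative.toAdd g.right ∧
      g' ^ i * g⁻¹ ∈ Subgroup.closure (PGenSet I (Multiplicative.toAdd g'.right)) ∧
      Subgroup.centralizer {g} =
        Subgroup.closure (PGenSet I (Multiplicative.toAdd g.right) ∪ {g'}) := by
  classical
  obtain ⟨a, ha⟩ := Int.subgroup_cyclic
    ((TSub I g.right.toAdd g.left.toAdd).comap (Int.castAddHom (ZMod I)))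
  set n : ZMod I := g.right.toAdd with hn
  set h : ZMod I →₀ ℤ := g.left.toAdd with hh
  set n' : ZMod I := ((a : ℤ) : ZMod I) with hn'
  have cast_eq : ∀ m : ZMod I, ((m.val : ℤ) : ZMod I) = m := by
    intro m
    push_cast
    exact ZMod.natCast_rightInverse m
  have mem_iff : ∀ m : ZMod I, m ∈ TSub I n h ↔ ∃ k : ℤ, k • n' = m := by
    intro m
    constructor
    · intro hm
      have h1 : (m.val : ℤ) ∈ (TSub I n h).comap (Int.castAddHom (ZMod I)) := by
        rw [AddSubgroup.mem_comap]
        simpa [Int.castAddHom, cast_eq m] using hm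
      rw [ha, AddSubgroup.mem_closure_singleton] at h1
      obtain ⟨k, hk⟩ := h1
      refine ⟨k, ?_⟩
      have := congrArg (fun z : ℤ => ((z : ℤ) : ZMod I)) hk
      simpa [cast_eq m] using this
    · rintro ⟨k, rfl⟩
      have han : n' ∈ TSub I n h := by
        have : a ∈ (TSub I n h).comap (Int.castAddHom (ZMod I)) := by
          rw [ha]
          exact AddSubgroup.subset_closure rfl
        rw [AddSubgroup.mem_comap] at this
        simpa [Int.castAddHom] using this
      exact AddSubgroup.zsmul_mem _ han k
  have hnT : n ∈ TSub I n h := ⟨h, rfl⟩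
  obtain ⟨i, hi⟩ := (mem_iff n).mp hnT
  have han : n' ∈ TSub I n h := (mem_iff n').mpr ⟨1, one_smul _ _⟩
  obtain ⟨h', hh'⟩ := han
  set g' : W I := ⟨Multiplicative.ofAdd h', Multiplicative.ofAdd n'⟩ with hg'
  have hg'r : g'.right.toAdd = n' := rfl
  have hg'l : g'.left.toAdd = h' := rfl
  have hg'cent : g' ∈ Subgroup.centralizer {g} := by
    rw [mem_centralizer_iff']
    exact hh'
  refine ⟨g', i, ?_, ?_, ?_⟩
  · rw [hg'r]
    rw [← zsmul_eq_mul]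
    exact hi
  · -- g'^i * g⁻¹ ∈ closure (PGenSet I n')
    set x : W I := g' ^ i * g⁻¹ with hx
    have hgc' : g ∈ Subgroup.centralizer {g'} := by
      rw [Subgroup.mem_centralizer_iff]
      intro y hy
      rw [Set.mem_singleton_iff] at hy
      subst hy
      have := Subgroup.mem_centralizer_iff.mp hg'cent g rfl
      exact this.symm
    have hxc : x ∈ Subgroup.centralizer {g'} := by
      refine mul_mem (zpow_mem ?_ i) (inv_mem hgc')
      rw [Subgroup.mem_centralizer_iff]
      intro y hy
      rw [Set.mem_singleton_iff] at hy
      subst hy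
      rfl
    have hxr : x.right = 1 := by
      have h1 : SemidirectProduct.rightHom x = 1 := by
        rw [hx, map_mul, map_zpow, map_inv]
        apply Multiplicative.toAdd.injective
        simp only [toAdd_mul, toAdd_zpow, toAdd_inv]
        show i • g'.right.toAdd + -(g.right.toAdd) = (0 : ZMod I)
        rw [hg'r, ← hn, hi]
        ring
      exact h1
    have hxinl : x = SemidirectProduct.inl (φ := shiftHom I) x.left := by
      refine SemidirectProduct.ext ?_ ?_
      · rfl
      · rw [SemidirectProduct.right_inl, hxr]
    rw [mem_centralizer_iff'] at hxc
    rw [hxr] at hxc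
    have h0 : (1 : Multiplicative (ZMod I)).toAdd = 0 := rfl
    rw [h0, shift_zero', sub_self, sub_eq_zero] at hxc
    have hper := periodic_mem_closure I (n := g'.right.toAdd) hxc
    have h2 := inl_mem_closure I hper
    rw [← PGenSet_eq] at h2
    have h3 : SemidirectProduct.inl (φ := shiftHom I)
        (Multiplicative.ofAdd x.left.toAdd) = x := by
      rw [ofAdd_toAdd, ← hxinl]
    rwa [h3] at h2
  · apply le_antisymm
    · intro y hy
      have hy0 := hy
      rw [mem_centralizer_iff'] at hy
      have hm : y.right.toAdd ∈ TSub I n h := ⟨y.left.toAdd, hy⟩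
      obtain ⟨k, hk⟩ := (mem_iff _).mp hm
      set z : W I := y * g' ^ (-k) with hz
      have hzc : z ∈ Subgroup.centralizer {g} := mul_mem hy0 (zpow_mem hg'cent (-k))
      have hzr : z.right = 1 := by
        have h1 : SemidirectProduct.rightHom z = 1 := by
          rw [hz, map_mul, map_zpow]
          apply Multiplicative.toAdd.injective
          simp only [toAdd_mul, toAdd_zpow]
          show y.right.toAdd + (-k) • g'.right.toAdd = (0 : ZMod I)
          rw [hg'r, neg_smul, hk]
          ring
        exact h1
      have hzinl : z = SemidirectProduct.inl (φ := shiftHom I) z.left := by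
        refine SemidirectProduct.ext rfl ?_
        rw [SemidirectProduct.right_inl, hzr]
      rw [mem_centralizer_iff'] at hzc
      rw [hzr] at hzc
      have h0 : (1 : Multiplicative (ZMod I)).toAdd = 0 := rfl
      rw [h0, shift_zero', sub_self, sub_eq_zero] at hzc
      have hper := periodic_mem_closure I (n := g.right.toAdd) hzc
      have h2 := inl_mem_closure I hper
      rw [← PGenSet_eq] at h2
      have h3 : SemidirectProduct.inl (φ := shiftHom I)
          (Multiplicative.ofAdd z.left.toAdd) = z := by
        rw [ofAdd_toAdd, ← hzinl]
      rw [h3] at h2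
      have hyz : y = z * g' ^ k := by
        rw [hz, mul_assoc, ← zpow_add, neg_add_cancel, zpow_zero, mul_one]
      rw [hyz]
      have hsub : PGenSet I (Multiplicative.toAdd g.right) ⊆
          PGenSet I (Multiplicative.toAdd g.right) ∪ {g'} := Set.subset_union_left
      have hg'mem : g' ∈ Subgroup.closure (PGenSet I (Multiplicative.toAdd g.right) ∪ {g'}) :=
        Subgroup.subset_closure (Set.mem_union_right _ rfl)
      have hzmem : z ∈ Subgroup.closure (PGenSet I (Multiplicative.toAdd g.right) ∪ {g'}) :=
        Subgroup.closure_mono hsub h2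
      exact mul_mem hzmem (zpow_mem hg'mem k)
    · rw [Subgroup.closure_le]
      rintro y (hy | hy)
      · obtain ⟨j, rfl⟩ := hy
        rw [SetLike.mem_coe, mem_centralizer_iff']
        show shiftEquiv I g.right.toAdd (pElt I j g.right.toAdd) - pElt I j g.right.toAdd =
          shiftEquiv I (0 : ZMod I) g.left.toAdd - g.left.toAdd
        rw [shift_pElt, shift_zero', sub_self, sub_self]
      · rw [Set.mem_singleton_iff] at hy
        subst hy
        exact hg'cent
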